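/- Let ν be any real number. Then there exists a constant C > 0 such that for all t with −1 < t < 1, |P^0_ν(t)| ≤ C (1 + |ln(1+t)|), where P^0_ν(t) = ₂F₁(ν+1, −ν; 1; (1−t)/2) is the Legendre function of order 0. -/

import Mathlib

open MeasureTheory Real Set Filter Topology

/-- Gauss hypergeometric function ₂F₁(a,b;c;s) as a power series. -/
noncomputable def hyp2F1 (a b c s : ℝ) : ℝ :=
  ∑' n : ℕ, ((∏ i ∈ Finset.range n, (a + i)) * (∏ i ∈ Finset.range n, (b + i)) /
    ((∏ i ∈ Finset.range n, (c + i)) * n.factorial)) * s ^ n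

/-- Associated Legendre function of the first kind, for -1 < t < 1. -/
noncomputable def legendreP (μ ν t : ℝ) : ℝ :=
  (1 / Real.Gamma (1 - μ)) * ((1 + t) / (1 - t)) ^ (μ / 2) *
    hyp2F1 (ν + 1) (-ν) (1 - μ) ((1 - t) / 2)

/-- The real factor of the associated Legendre function of the second kind (t > 1),
i.e. `Q^μ_ν(t)` without its phase `e^{iπμ}`. -/
noncomputable def legendreQreal (μ ν t : ℝ) : ℝ :=
  Real.sqrt Real.pi * Real.Gamma (μ + ν + 1) * (t ^ 2 - 1) ^ (μ / 2) /
    ((2 : ℝ) ^ (ν + 1) * t ^ (μ + ν + 1) * Real.Gamma (ν + 3 / 2)) *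
    hyp2F1 ((μ + ν) / 2 + 1) ((μ + ν + 1) / 2) (ν + 3 / 2) (1 / t ^ 2)

/-- Associated Legendre function of the second kind, for t > 1. -/
noncomputable def legendreQ (μ ν t : ℝ) : ℂ :=
  Complex.exp ((Real.pi * μ : ℝ) * Complex.I) * (legendreQreal μ ν t : ℝ)

/-- Macdonald's integral `R_{μ,ν}(x,y,z)` of three Bessel functions, for x, y, z > 0. -/
noncomputable def Rmn (μ ν x y z : ℝ) : ℝ :=
  if z < |x - y| then 0
  else if z < x + y then
    (x * y) ^ (μ - 1) *
      Real.sqrt (1 - ((x ^ 2 + y ^ 2 - z ^ 2) / (2 * x * y)) ^ 2) ^ (μ - 1 / 2) *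
      legendreP (1 / 2 - μ) (ν - 1 / 2) ((x ^ 2 + y ^ 2 - z ^ 2) / (2 * x * y)) /
      (Real.sqrt (2 * Real.pi) * z ^ μ)
  else
    Real.sin ((ν - μ) * Real.pi) * (x * y) ^ (μ - 1) *
      Real.sqrt (((z ^ 2 - x ^ 2 - y ^ 2) / (2 * x * y)) ^ 2 - 1) ^ (μ - 1 / 2) *
      legendreQreal (1 / 2 - μ) (ν - 1 / 2) ((z ^ 2 - x ^ 2 - y ^ 2) / (2 * x * y)) /
      (Real.sqrt (Real.pi ^ 3 / 2) * z ^ μ)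

/-- Normalized Bessel function 𝒥_ν. -/
noncomputable def normBessel (ν w : ℝ) : ℝ :=
  Real.Gamma (ν + 1) *
    ∑' n : ℕ, (-1 : ℝ) ^ n * (w / 2) ^ (2 * n) / (n.factorial * Real.Gamma (ν + n + 1))

/-- Bessel function of the first kind J_ν. -/
noncomputable def besselJ (ν w : ℝ) : ℝ :=
  (w / 2) ^ ν *
    ∑' n : ℕ, (-1 : ℝ) ^ n * (w / 2) ^ (2 * n) / (n.factorial * Real.Gamma (ν + n + 1))

/-- The constant m_{k,a}. -/
noncomputable def mka (k a : ℝ) : ℂ :=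
  Complex.exp ((-(Real.pi / a) : ℝ) * Complex.I) *
    ((Real.Gamma ((2 * k + a - 1) / a) /
      (a ^ ((2 : ℝ) / a) * Real.Gamma ((2 * k + a + 1) / a)) : ℝ) : ℂ)

/-- The one-dimensional (k,a)-generalized Fourier kernel B_{k,a}(λ,x). -/
noncomputable def Bka (k a lam x : ℝ) : ℂ :=
  ((normBessel ((2 * k - 1) / a) ((2 / a) * |lam * x| ^ (a / 2)) : ℝ) : ℂ) +
    mka k a * ((lam * x : ℝ) : ℂ) *
      ((normBessel ((2 * k + 1) / a) ((2 / a) * |lam * x| ^ (a / 2)) : ℝ) : ℂ)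

/-- The kernel Δ_{k,a}(x,y,z) of the product formula. -/
noncomputable def DeltaKA (k a x y z : ℝ) : ℂ :=
  ((a * (2 : ℝ) ^ ((2 * k - 1) / a - 2) * Real.Gamma ((2 * k - 1) / a + 1) *
      |x * y * z| ^ ((1 : ℝ) / 2 - k) : ℝ) : ℂ) *
  (((Rmn ((2 * k - 1) / a) ((2 * k - 1) / a) (|x| ^ (a / 2)) (|y| ^ (a / 2)) (|z| ^ (a / 2)) : ℝ) : ℂ) +
    Complex.exp ((-(2 * Real.pi / a) : ℝ) * Complex.I) * ((Real.sign (x * y) : ℝ) : ℂ) *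
      ((Rmn ((2 * k - 1) / a) ((2 * k + 1) / a) (|x| ^ (a / 2)) (|y| ^ (a / 2)) (|z| ^ (a / 2)) : ℝ) : ℂ) +
    ((Real.sign (x * z) : ℝ) : ℂ) *
      ((Rmn ((2 * k - 1) / a) ((2 * k + 1) / a) (|x| ^ (a / 2)) (|z| ^ (a / 2)) (|y| ^ (a / 2)) : ℝ) : ℂ) +
    ((Real.sign (y * z) : ℝ) : ℂ) *
      ((Rmn ((2 * k - 1) / a) ((2 * k + 1) / a) (|y| ^ (a / 2)) (|z| ^ (a / 2)) (|x| ^ (a / 2)) : ℝ) : ℂ))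

/-- The weighted measure |x|^{2k+a-2} dx on ℝ. -/
noncomputable def wMeasure (k a : ℝ) : Measure ℝ :=
  volume.withDensity fun x => ENNReal.ofReal (|x| ^ (2 * k + a - 2))

/-- Gegenbauer polynomial C_n^μ. -/
noncomputable def gegenbauer (μ : ℝ) (n : ℕ) (x : ℝ) : ℝ :=
  ∑ j ∈ Finset.range (n / 2 + 1),
    (-1 : ℝ) ^ j * Real.Gamma ((n : ℝ) - j + μ) /
      (Real.Gamma μ * j.factorial * (n - 2 * j).factorial) * (2 * x) ^ (n - 2 * j)
set_option maxHeartbeats 1000000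

lemma prod_one_add_eq_factorial (n : ℕ) :
    ∏ i ∈ Finset.range n, ((1:ℝ) + i) = n.factorial := by
  induction n with
  | zero => simp
  | succ n ih =>
    rw [Finset.prod_range_succ, ih, Nat.factorial_succ]
    push_cast; ring

lemma key_bound (ν : ℝ) (n : ℕ) :
    ((n:ℝ)+1) * (abs (∏ i ∈ Finset.range n, (ν+1+(i:ℝ))) * abs (∏ i ∈ Finset.range n, (-ν+(i:ℝ))))
      ≤ Real.exp (2*|ν^2+ν| * (2-2/((n:ℝ)+1))) * ((n.factorial : ℝ))^2 := by
  induction n with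
  | zero => norm_num
  | succ n ih =>
    set M := |ν^2+ν| with hMdef
    have hM0 : 0 ≤ M := abs_nonneg _
    set x := (n:ℝ) with hxdef
    have hx0 : 0 ≤ x := Nat.cast_nonneg n
    rw [Finset.prod_range_succ, Finset.prod_range_succ, Nat.factorial_succ, abs_mul, abs_mul]
    push_cast
    set F := (n.factorial : ℝ) with hFdef
    have hF0 : (0:ℝ) < F := by rw [hFdef]; exact_mod_cast n.factorial_pos
    set P := abs (∏ i ∈ Finset.range n, (ν+1+(i:ℝ))) with hP
    set Q := abs (∏ i ∈ Finset.range n, (-ν+(i:ℝ))) with hQ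
    have hP0 : 0 ≤ P := abs_nonneg _
    have hQ0 : 0 ≤ Q := abs_nonneg _
    have habs : |ν+1+x| * |-ν+x| ≤ x^2+x+M := by
      rw [← abs_mul]
      have h1 : (ν+1+x) * (-ν+x) = (x^2+x) - (ν^2+ν) := by ring
      rw [h1]
      calc |(x^2+x) - (ν^2+ν)| ≤ |x^2+x| + |ν^2+ν| := abs_sub _ _
        _ = x^2+x+M := by rw [abs_of_nonneg (by positivity)]
    have hδ : 2*M*(2-2/(x+1+1)) = 2*M*(2-2/(x+1)) + 4*M/((x+1)*(x+2)) := by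
      field_simp
      ring
    rw [hδ, Real.exp_add]
    set E := Real.exp (2*M*(2-2/(x+1))) with hE
    set eδ := Real.exp (4*M/((x+1)*(x+2))) with heδ
    have hE0 : 0 < E := Real.exp_pos _
    have hd : (0:ℝ) < (x+1)*(x+2) := by positivity
    have hexpδ : 1 + 4*M/((x+1)*(x+2)) ≤ eδ := by
      rw [heδ]; linarith [Real.add_one_le_exp (4*M/((x+1)*(x+2)))]
    have hpoly : (x+2)*(x^2+x+M) ≤ eδ * (x+1)^3 := by
      have h1 : (x+2)*(x^2+x+M) ≤ (1 + 4*M/((x+1)*(x+2))) * (x+1)^3 := by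
        rw [← mul_le_mul_iff_of_pos_right hd]
        have h2 : (1 + 4*M/((x+1)*(x+2))) * (x+1)^3 * ((x+1)*(x+2))
            = (x+1)^3*((x+1)*(x+2)) + 4*M*(x+1)^3 := by
          field_simp
        rw [h2]
        have h3 : (x+1)^3*((x+1)*(x+2)) + 4*M*(x+1)^3 - (x+2)*(x^2+x+M)*((x+1)*(x+2))
            = (x+1)^2*(x+2) + M*(x+1)*(3*x^2+4*x) := by ring
        nlinarith [sq_nonneg (x+1), mul_nonneg hM0 hx0, mul_nonneg (mul_nonneg hM0 hx0) hx0]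
      calc (x+2)*(x^2+x+M) ≤ (1 + 4*M/((x+1)*(x+2))) * (x+1)^3 := h1
        _ ≤ eδ * (x+1)^3 := by
            apply mul_le_mul_of_nonneg_right hexpδ (by positivity)
    have hx1 : (0:ℝ) < x + 1 := by linarith
    rw [← mul_le_mul_iff_of_pos_left hx1]
    calc (x+1) * ((x+1+1) * (P * |ν+1+x| * (Q * |-ν+x|)))
        = ((x+2) * (|ν+1+x| * |-ν+x|)) * ((x+1)*(P*Q)) := by ring
      _ ≤ ((x+2) * (x^2+x+M)) * (E*F^2) := by
          apply mul_le_mul _ ih (by positivity) (by positivity)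
          exact mul_le_mul_of_nonneg_left habs (by linarith)
      _ ≤ (eδ * (x+1)^3) * (E*F^2) := mul_le_mul_of_nonneg_right hpoly (by positivity)
      _ = (x+1) * (E * eδ * ((x+1)*F)^2) := by ring

/-- Estimate (2.13): logarithmic bound for the Legendre function of order 0. -/
theorem statement16 (ν : ℝ) :
    ∃ C : ℝ, 0 < C ∧ ∀ t : ℝ, -1 < t → t < 1 →
      |legendreP 0 ν t| ≤ C * (1 + |Real.log (1 + t)|) := by
  set M := |ν^2+ν| with hMdef
  have hM0 : 0 ≤ M := abs_nonneg _
  set K := Real.exp (4*M) with hKdef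
  have hK1 : 1 ≤ K := Real.one_le_exp (by positivity)
  have hK0 : (0:ℝ) < K := lt_of_lt_of_le one_pos hK1
  have hlog2 : 0 < Real.log 2 := Real.log_pos (by norm_num)
  refine ⟨K * (1 + Real.log 2), by nlinarith, ?_⟩
  intro t ht1 ht2
  set s := (1-t)/2 with hsdef
  have hs0 : 0 ≤ s := by rw [hsdef]; linarith
  have hs1 : s < 1 := by rw [hsdef]; linarith
  set f : ℕ → ℝ := fun n =>
    ((∏ i ∈ Finset.range n, (ν + 1 + (i:ℝ))) * (∏ i ∈ Finset.range n, (-ν + (i:ℝ))) /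
      ((∏ i ∈ Finset.range n, ((1:ℝ) + i)) * n.factorial)) * s ^ n with hfdef
  have hleg : legendreP 0 ν t = ∑' n, f n := by
    rw [legendreP, hyp2F1]
    norm_num [Real.Gamma_one]
    rfl
  -- termwise bound
  set g : ℕ → ℝ := fun n => if n = 0 then K else K * s^n / n with hgdef
  have hterm : ∀ n, |f n| ≤ g n := by
    intro n
    have hF0 : (0:ℝ) < (n.factorial : ℝ) := by exact_mod_cast n.factorial_pos
    have hc : abs (∏ i ∈ Finset.range n, (ν+1+(i:ℝ))) * abs (∏ i ∈ Finset.range n, (-ν+(i:ℝ)))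
        / ((n.factorial:ℝ) * n.factorial) ≤ K / ((n:ℝ)+1) := by
      rw [div_le_div_iff₀ (by positivity) (by positivity)]
      have h2 : 2*M*(2-2/((n:ℝ)+1)) ≤ 4*M := by
        have h3 : 0 ≤ M * (2/((n:ℝ)+1)) := by positivity
        nlinarith
      calc abs (∏ i ∈ Finset.range n, (ν+1+(i:ℝ))) * abs (∏ i ∈ Finset.range n, (-ν+(i:ℝ))) * ((n:ℝ)+1)
          = ((n:ℝ)+1) * (abs (∏ i ∈ Finset.range n, (ν+1+(i:ℝ))) * abs (∏ i ∈ Finset.range n, (-ν+(i:ℝ)))) := by ring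
        _ ≤ Real.exp (2*|ν^2+ν| * (2-2/((n:ℝ)+1))) * ((n.factorial : ℝ))^2 := key_bound ν n
        _ ≤ K * ((n.factorial : ℝ))^2 := by
            apply mul_le_mul_of_nonneg_right (Real.exp_le_exp.mpr h2) (by positivity)
        _ = K * ((n.factorial:ℝ) * n.factorial) := by ring
    have habsf : |f n| = abs (∏ i ∈ Finset.range n, (ν+1+(i:ℝ))) * abs (∏ i ∈ Finset.range n, (-ν+(i:ℝ)))
        / ((n.factorial:ℝ) * n.factorial) * s ^ n := by
      rw [hfdef]
      simp only [prod_one_add_eq_factorial]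
      rw [abs_mul, abs_div, abs_mul, abs_mul, abs_of_nonneg (pow_nonneg hs0 n),
        abs_of_nonneg hF0.le]
    rw [habsf]
    rcases Nat.eq_zero_or_pos n with hn | hn
    · subst hn
      simp only [hgdef, if_pos rfl]
      norm_num
      linarith
    · have hn0 : (0:ℝ) < n := by exact_mod_cast hn
      rw [hgdef]
      simp only [Nat.pos_iff_ne_zero.mp hn, if_false]
      calc _ ≤ K / ((n:ℝ)+1) * s^n := mul_le_mul_of_nonneg_right hc (pow_nonneg hs0 n)
        _ ≤ K / (n:ℝ) * s^n := by
            apply mul_le_mul_of_nonneg_right _ (pow_nonneg hs0 n)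
            apply div_le_div_of_nonneg_left hK0.le hn0 (by linarith)
        _ = K * s^n / n := by ring
  -- summability and sum of g
  have habs_s : |s| < 1 := by rwa [abs_of_nonneg hs0]
  have hlogsum : HasSum (fun n : ℕ => K * (s^(n+1)/((n:ℝ)+1))) (K * (-Real.log (1-s))) :=
    (hasSum_pow_div_log_of_abs_lt_one habs_s).mul_left K
  have hg : HasSum g (K * (-Real.log (1-s)) + K) := by
    have h1 : (fun n : ℕ => g (n+1)) = fun n : ℕ => K * (s^(n+1)/((n:ℝ)+1)) := by
      funext n
      simp only [hgdef, Nat.succ_ne_zero, if_false]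
      push_cast; ring
    have h2 := (hasSum_nat_add_iff (f := g) 1).mp (h1 ▸ hlogsum)
    simpa [hgdef] using h2
  have hfabs : Summable (fun n => |f n|) :=
    Summable.of_nonneg_of_le (fun n => abs_nonneg _) hterm hg.summable
  have hbound : |∑' n, f n| ≤ K * (-Real.log (1-s)) + K := by
    calc |∑' n, f n| ≤ ∑' n, |f n| := by
          simpa only [Real.norm_eq_abs] using
            norm_tsum_le_tsum_norm (f := f) (by simpa only [Real.norm_eq_abs] using hfabs)
      _ ≤ ∑' n, g n := Summable.tsum_le_tsum hterm hfabs hg.summable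
      _ = K * (-Real.log (1-s)) + K := hg.tsum_eq
  rw [hleg]
  have h1s : 1 - s = (1+t)/2 := by rw [hsdef]; ring
  have ht0 : (0:ℝ) < 1 + t := by linarith
  have hlogs : Real.log (1-s) = Real.log (1+t) - Real.log 2 := by
    rw [h1s, Real.log_div (by linarith) (by norm_num)]
  set L := Real.log (1+t) with hL
  have hfin : K * (-Real.log (1-s)) + K ≤ K * (1 + Real.log 2) * (1 + |L|) := by
    rw [hlogs]
    have h1 : -|L| ≤ L := neg_abs_le L
    have h2 : 0 ≤ K * (|L| + L) := mul_nonneg hK0.le (by linarith)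
    have h3 : 0 ≤ K * (Real.log 2 * |L|) :=
      mul_nonneg hK0.le (mul_nonneg hlog2.le (abs_nonneg L))
    nlinarith
  linarith [hbound, hfin]
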